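/- For h a nonzero integer and q ∈ ℂ with 0<|q|<1, the q-Bernoulli numbers satisfy the recurrence q^h · Σ_{k=0}^{n} C(n,k) B_{k,q}^{(h)} − B_{n,q}^{(h)} = δ_{1,n} for all n ≥ 1, where δ is the Kronecker delta (this is the umbral relation q^h(B_q^{(h)}+1)^n − B_{n,q}^{(h)} = δ_{1,n}). -/

import Mathlib

open Filter
open scoped ENNReal

/-- Uniqueness of power series coefficients: if `∑ c n * t^n = 0` on a ball, all `c n = 0`. -/
lemma qBern_aux_coeff_zero (c : ℕ → ℂ) (ε : ℝ) (hε : 0 < ε)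
    (hc : ∀ t : ℂ, ‖t‖ < ε → HasSum (fun n => c n * t ^ n) 0) : ∀ n, c n = 0 := by
  set p := FormalMultilinearSeries.ofScalars ℂ c with hp
  have hnorm : ∀ n, ‖p n‖ = ‖c n‖ := fun n => FormalMultilinearSeries.ofScalars_norm ℂ c n
  have hεhalf : (0:ℝ) ≤ ε / 2 := by linarith
  have hhalf : ‖((ε / 2 : ℝ) : ℂ)‖ < ε := by
    rw [Complex.norm_real, Real.norm_eq_abs, abs_of_nonneg hεhalf]; linarith
  have hsum := hc _ hhalf
  have htend : Tendsto (fun n => ‖p n‖ * ((ε/2).toNNReal : ℝ) ^ n) atTop (nhds 0) := by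
    have h1 := hsum.summable.tendsto_atTop_zero
    have h2 := tendsto_zero_iff_norm_tendsto_zero.mp h1
    convert h2 using 2 with n
    rw [hnorm, norm_mul, norm_pow, Complex.norm_real, Real.norm_eq_abs, abs_of_nonneg hεhalf,
      Real.coe_toNNReal _ hεhalf]
  have hrad : (((ε/2).toNNReal : ℝ≥0∞)) ≤ p.radius := p.le_radius_of_tendsto htend
  have hr0pos : (0 : ℝ≥0∞) < ((ε/2).toNNReal : ℝ≥0∞) := by
    rw [ENNReal.coe_pos, Real.toNNReal_pos]; linarith
  have hball : HasFPowerSeriesOnBall (0 : ℂ → ℂ) p 0 ((ε/2).toNNReal : ℝ≥0∞) := by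
    refine ⟨hrad, hr0pos, ?_⟩
    intro y hy
    rw [mem_emetric_ball_zero_iff, enorm_eq_nnnorm, ENNReal.coe_lt_coe] at hy
    have hy' : ‖y‖ < ε := by
      have h2 : (‖y‖₊ : ℝ) < ((ε/2).toNNReal : ℝ) := NNReal.coe_lt_coe.mpr hy
      rw [coe_nnnorm, Real.coe_toNNReal _ hεhalf] at h2
      linarith
    have := hc y hy'
    have heq : (fun n : ℕ => p n fun _ => y) = fun n => c n * y ^ n := by
      funext n
      rw [hp, FormalMultilinearSeries.ofScalars_apply_eq, smul_eq_mul]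
    rw [heq]
    exact this
  have hat : HasFPowerSeriesAt (0 : ℂ → ℂ) p 0 := ⟨_, hball⟩
  have hzero : p = 0 := hat.eq_zero
  intro n
  have h0 : p n = 0 := by rw [hzero]; rfl
  exact (FormalMultilinearSeries.ofScalars_eq_zero ℂ n).mp h0

/-- the umbral recurrence `q^h (B_q+1)^n − B_n = δ_{1,n}` for `n ≥ 1`,
for the `q`-Bernoulli numbers defined by `(h log q + t)/(q^h e^t − 1) = Σ B n tⁿ/n!`. -/
theorem qBernoulli_recurrence
    (h : ℤ) (hh : h ≠ 0) (q : ℂ) (hq0 : 0 < ‖q‖) (hq1 : ‖q‖ < 1)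
    (B : ℕ → ℂ) (r : ℝ) (hr : 0 < r)
    (hB : ∀ t : ℂ, ‖t‖ < r →
      HasSum (fun n : ℕ => B n * t ^ n / (n.factorial : ℂ))
        (((h : ℂ) * Complex.log q + t) / (q ^ h * Complex.exp t - 1))) :
    ∀ n : ℕ, 1 ≤ n →
      q ^ h * (∑ k ∈ Finset.range (n + 1), (n.choose k : ℂ) * B k) - B n
        = if n = 1 then 1 else 0 := by
  have hqz : q ≠ 0 := norm_pos_iff.mp hq0
  have ha0 : (0:ℝ) < ‖q ^ h‖ := by
    rw [norm_zpow]; exact zpow_pos hq0 h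
  have hlogne : Real.log ‖q ^ h‖ ≠ 0 := by
    rw [norm_zpow, Real.log_zpow]
    exact mul_ne_zero (Int.cast_ne_zero.mpr hh) (ne_of_lt (Real.log_neg hq0 hq1))
  set L : ℝ := |Real.log ‖q ^ h‖| with hLdef
  have hL : 0 < L := abs_pos.mpr hlogne
  set ε : ℝ := min r L with hεdef
  have hε : 0 < ε := lt_min hr hL
  have hεr : ε ≤ r := min_le_left _ _
  -- nonvanishing of the denominator on the small ball
  have hD : ∀ t : ℂ, ‖t‖ < ε → q ^ h * Complex.exp t - 1 ≠ 0 := by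
    intro t ht h0
    have h1 : q ^ h * Complex.exp t = 1 := by
      have := sub_eq_zero.mp h0; exact this
    have h2 : ‖q ^ h‖ * Real.exp t.re = 1 := by
      have := congrArg norm h1
      rwa [norm_mul, Complex.norm_exp, norm_one] at this
    have h3 : Real.exp t.re = (‖q ^ h‖)⁻¹ := by
      rw [inv_eq_one_div, eq_div_iff (ne_of_gt ha0), mul_comm]
      exact h2
    have h4 : t.re = -Real.log ‖q ^ h‖ := by
      have := congrArg Real.log h3
      rwa [Real.log_exp, Real.log_inv] at this
    have h5 : |t.re| < L := lt_of_le_of_lt (Complex.abs_re_le_norm t)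
      (lt_of_lt_of_le ht (min_le_right _ _))
    rw [h4, abs_neg] at h5
    exact absurd h5 (lt_irrefl L)
  -- absolute summability of the B-series inside the ball
  have hSummB : ∀ t : ℂ, ‖t‖ < ε → Summable (fun n => ‖B n * t ^ n / (n.factorial : ℂ)‖) := by
    intro t ht
    set ρ : ℝ := (‖t‖ + ε) / 2 with hρdef
    have hnt : (0:ℝ) ≤ ‖t‖ := norm_nonneg t
    have hρ0 : 0 < ρ := by positivity
    have hρ1 : ‖t‖ < ρ := by rw [hρdef]; linarith
    have hρr : ρ < r := by
      have : ρ < ε := by rw [hρdef]; linarith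
      linarith
    have hs := hB (ρ : ℂ) (by rw [Complex.norm_real, Real.norm_eq_abs, abs_of_pos hρ0]; exact hρr)
    have hbdd : BddAbove (Set.range fun n => ‖B n * (ρ:ℂ) ^ n / (n.factorial : ℂ)‖) := by
      have htend0 : Tendsto (fun n => ‖B n * (ρ:ℂ) ^ n / (n.factorial : ℂ)‖) atTop (nhds 0) :=
        tendsto_zero_iff_norm_tendsto_zero.mp hs.summable.tendsto_atTop_zero
      exact htend0.bddAbove_range
    obtain ⟨C, hC⟩ := hbdd
    have hCb : ∀ n : ℕ, ‖B n * (ρ:ℂ) ^ n / (n.factorial : ℂ)‖ ≤ C :=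
      fun n => hC (Set.mem_range_self n)
    set x : ℝ := ‖t‖ / ρ with hxdef
    have hx0 : 0 ≤ x := by positivity
    have hx1 : x < 1 := by rw [hxdef, div_lt_one hρ0]; exact hρ1
    refine Summable.of_nonneg_of_le (fun n => norm_nonneg _) (fun n => ?_)
      (((summable_geometric_of_lt_one hx0 hx1).mul_left C))
    have hxρ : ‖t‖ = ρ * x := by
      rw [hxdef]; field_simp
    have hterm : ‖B n * t ^ n / (n.factorial : ℂ)‖
        = ‖B n * (ρ:ℂ) ^ n / (n.factorial : ℂ)‖ * x ^ n := by
      rw [norm_div, norm_div, norm_mul, norm_mul, norm_pow, norm_pow, Complex.norm_real,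
        Real.norm_eq_abs, abs_of_pos hρ0, hxρ, mul_pow]
      ring
    rw [hterm]
    have := mul_le_mul_of_nonneg_right (hCb n) (pow_nonneg hx0 n)
    exact this
  -- the coefficients S and the target delta
  set S : ℕ → ℂ := fun m => ∑ k ∈ Finset.range (m + 1), (m.choose k : ℂ) * B k with hSdef
  set d : ℕ → ℂ := fun m => if m = 0 then (h : ℂ) * Complex.log q else if m = 1 then 1 else 0
    with hddef
  have hmain : ∀ t : ℂ, ‖t‖ < ε →
      HasSum (fun m => ((q ^ h * S m - B m - d m) / (m.factorial : ℂ)) * t ^ m) 0 := by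
      intro t ht
      have htr : ‖t‖ < r := lt_of_lt_of_le ht hεr
      have hF := hB t htr
      set D : ℂ := q ^ h * Complex.exp t - 1 with hDdef
      set F : ℂ := ((h : ℂ) * Complex.log q + t) / D with hFdef
      have hD0 : D ≠ 0 := hD t ht
      have hEs : HasSum (fun m : ℕ => t ^ m / (m.factorial : ℂ)) (Complex.exp t) := by
        rw [Complex.exp_eq_exp_ℂ]
        exact NormedSpace.expSeries_div_hasSum_exp t
      have hsum1 := hSummB t ht
      have hsum2 : Summable (fun m : ℕ => ‖t ^ m / (m.factorial : ℂ)‖) := by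
        refine Summable.congr (Real.summable_pow_div_factorial ‖t‖) (fun m => ?_)
        rw [norm_div, norm_pow, Complex.norm_natCast]
      have hprod_sum : Summable (fun m : ℕ => ∑ kl ∈ Finset.HasAntidiagonal.antidiagonal m,
          (B kl.1 * t ^ kl.1 / (kl.1.factorial : ℂ)) * (t ^ kl.2 / (kl.2.factorial : ℂ))) :=
        (summable_norm_sum_mul_antidiagonal_of_summable_norm hsum1 hsum2).of_norm
      have htsum := tsum_mul_tsum_eq_tsum_sum_antidiagonal_of_summable_norm hsum1 hsum2
      have hFE : HasSum (fun m : ℕ => ∑ kl ∈ Finset.HasAntidiagonal.antidiagonal m,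
          (B kl.1 * t ^ kl.1 / (kl.1.factorial : ℂ)) * (t ^ kl.2 / (kl.2.factorial : ℂ)))
          (F * Complex.exp t) := by
        have h1 := hprod_sum.hasSum
        rwa [← htsum, hF.tsum_eq, hEs.tsum_eq] at h1
      have hcoef : ∀ m : ℕ, (∑ kl ∈ Finset.HasAntidiagonal.antidiagonal m,
          (B kl.1 * t ^ kl.1 / (kl.1.factorial : ℂ)) * (t ^ kl.2 / (kl.2.factorial : ℂ)))
          = S m * t ^ m / (m.factorial : ℂ) := by
        intro m
        rw [Finset.Nat.sum_antidiagonal_eq_sum_range_succ_mk, hSdef, Finset.sum_mul,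
          Finset.sum_div]
        refine Finset.sum_congr rfl (fun k hk => ?_)
        have hkm : k ≤ m := Nat.lt_succ_iff.mp (Finset.mem_range.mp hk)
        have hfac : ((m.choose k : ℕ) : ℂ) * (k.factorial : ℂ) * ((m - k).factorial : ℂ)
            = (m.factorial : ℂ) := by
          exact_mod_cast congrArg (Nat.cast : ℕ → ℂ)
            (Nat.choose_mul_factorial_mul_factorial hkm)
        have hpow : t ^ k * t ^ (m - k) = t ^ m := by
          rw [← pow_add]; congr 1; omega
        have h1 : (k.factorial : ℂ) ≠ 0 := Nat.cast_ne_zero.mpr k.factorial_ne_zero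
        have h2 : ((m - k).factorial : ℂ) ≠ 0 := Nat.cast_ne_zero.mpr (m - k).factorial_ne_zero
        have h3 : (m.factorial : ℂ) ≠ 0 := Nat.cast_ne_zero.mpr m.factorial_ne_zero
        have hC0 : ((m.choose k : ℕ) : ℂ) ≠ 0 := Nat.cast_ne_zero.mpr (Nat.choose_pos hkm).ne'
        rw [div_mul_div_comm, mul_assoc, hpow, ← hfac]
        rw [mul_assoc, mul_assoc, mul_div_mul_left _ _ hC0]
      have h1 : HasSum (fun m : ℕ => S m * t ^ m / (m.factorial : ℂ)) (F * Complex.exp t) := by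
        have := hFE
        simp only [hcoef] at this
        exact this
      have h2 : HasSum (fun m : ℕ => (q ^ h * S m - B m) * t ^ m / (m.factorial : ℂ))
          ((h : ℂ) * Complex.log q + t) := by
        have hval : q ^ h * (F * Complex.exp t) - F = (h : ℂ) * Complex.log q + t := by
          have hFD : F * D = (h : ℂ) * Complex.log q + t := div_mul_cancel₀ _ hD0
          calc q ^ h * (F * Complex.exp t) - F = F * (q ^ h * Complex.exp t - 1) := by ring
          _ = F * D := by rw [hDdef]
          _ = (h : ℂ) * Complex.log q + t := hFD
        have hcomb := (h1.mul_left (q ^ h)).sub hF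
        rw [hval] at hcomb
        have heq : (fun m : ℕ => q ^ h * (S m * t ^ m / (m.factorial : ℂ))
            - B m * t ^ m / (m.factorial : ℂ))
            = fun m => (q ^ h * S m - B m) * t ^ m / (m.factorial : ℂ) := by
          funext m; ring
        rwa [heq] at hcomb
      have h3 : HasSum (fun m : ℕ => d m * t ^ m / (m.factorial : ℂ))
          ((h : ℂ) * Complex.log q + t) := by
        have hvanish : ∀ m ∉ ({0, 1} : Finset ℕ), d m * t ^ m / (m.factorial : ℂ) = 0 := by
          intro m hm
          simp only [Finset.mem_insert, Finset.mem_singleton, not_or] at hm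
          simp [hddef, hm.1, hm.2]
        have hs : HasSum (fun m : ℕ => d m * t ^ m / (m.factorial : ℂ))
            (∑ m ∈ ({0, 1} : Finset ℕ), d m * t ^ m / (m.factorial : ℂ)) :=
          hasSum_sum_of_ne_finset_zero hvanish
        have hsumval : ∑ m ∈ ({0, 1} : Finset ℕ), d m * t ^ m / (m.factorial : ℂ)
            = (h : ℂ) * Complex.log q + t := by
          rw [Finset.sum_pair (by norm_num : (0:ℕ) ≠ 1)]
          simp [hddef]
        rwa [hsumval] at hs
      have h4 := h2.sub h3
      rw [sub_self] at h4
      have heq2 : (fun m : ℕ => (q ^ h * S m - B m) * t ^ m / (m.factorial : ℂ)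
          - d m * t ^ m / (m.factorial : ℂ))
          = fun m => ((q ^ h * S m - B m - d m) / (m.factorial : ℂ)) * t ^ m := by
        funext m; ring
      rwa [heq2] at h4
  have hzero := qBern_aux_coeff_zero
    (fun m => (q ^ h * S m - B m - d m) / (m.factorial : ℂ)) ε hε hmain
  have hKey : ∀ m : ℕ, q ^ h * S m - B m = d m := by
    intro m
    have hm := hzero m
    have hfz : (m.factorial : ℂ) ≠ 0 := Nat.cast_ne_zero.mpr m.factorial_ne_zero
    have h0 : q ^ h * S m - B m - d m = 0 := by
      exact (div_eq_zero_iff.mp hm).resolve_right hfz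
    linear_combination h0
  intro n hn
  rw [hKey n]
  have hn0 : n ≠ 0 := by omega
  simp only [hddef]
  simp [hn0]
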